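/- arXiv:2304.10923 — 4 statements merged into one kernel-verified Lean document; each statement's English description precedes it below -/
import Mathlib

section
/- The map V : ℝ^(n-1) → ℝ^n defined by V(x') = (-x', 1) / sqrt(1 + |x'|²) is Lipschitz continuous with Lipschitz constant 1. -/
/-- Auxiliary real inequality. -/
lemma stmt0_real_ineq (u v s : ℝ) (hu : 0 ≤ u) (hv : 0 ≤ v) (hs : s ≤ u * v)
    (c d : ℝ) (hc : c = Real.sqrt (1 + u^2)) (hd : d = Real.sqrt (1 + v^2)) :
    2 - 2 * (1 + s) / (c * d) ≤ u^2 + v^2 - 2*s := by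
  have hc2 : c^2 = 1 + u^2 := by rw [hc]; exact Real.sq_sqrt (by positivity)
  have hd2 : d^2 = 1 + v^2 := by rw [hd]; exact Real.sq_sqrt (by positivity)
  have hc0 : 0 ≤ c := hc ▸ Real.sqrt_nonneg _
  have hd0 : 0 ≤ d := hd ▸ Real.sqrt_nonneg _
  have hc1 : 1 ≤ c := by nlinarith
  have hd1 : 1 ≤ d := by nlinarith
  have hcd : 0 < c * d := by nlinarith
  have h1 : 1 + u*v ≤ c*d := by nlinarith [sq_nonneg (u - v), sq_nonneg (c*d - (1+u*v))]
  have h2 : c*d ≤ 1 + (u^2+v^2)/2 := by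
    nlinarith [sq_nonneg (u^2 - v^2), sq_nonneg (c*d - (1+(u^2+v^2)/2)), sq_nonneg (c - d)]
  have hA : (0:ℝ) ≤ (c*d-1)*(c*d-(1+s)) := mul_nonneg (by nlinarith) (by nlinarith)
  have hB : (0:ℝ) ≤ (c*d)*((u^2+v^2)/2 - (c*d-1)) := mul_nonneg (le_of_lt hcd) (by linarith)
  rw [sub_le_iff_le_add, ← sub_le_iff_le_add', le_div_iff₀ hcd]
  nlinarith [hA, hB]

/-- Auxiliary inner product computation. -/
lemma stmt0_inner (m : ℕ)
    (V : EuclideanSpace ℝ (Fin m) → EuclideanSpace ℝ (Fin (m + 1)))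
    (hV : ∀ (x : EuclideanSpace ℝ (Fin m)) (i : Fin (m + 1)),
      V x i = (if h : (i : ℕ) < m then -x ⟨i, h⟩ else 1) / Real.sqrt (1 + ‖x‖ ^ 2))
    (x y : EuclideanSpace ℝ (Fin m)) :
    (inner ℝ (V x) (V y) : ℝ) = (1 + inner ℝ x y) /
      (Real.sqrt (1 + ‖x‖^2) * Real.sqrt (1 + ‖y‖^2)) := by
  set a := Real.sqrt (1 + ‖x‖^2) with ha
  set b := Real.sqrt (1 + ‖y‖^2) with hb
  rw [PiLp.inner_apply, PiLp.inner_apply]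
  simp only [RCLike.inner_apply, conj_trivial]
  rw [Finset.sum_congr rfl (fun i _ => mul_comm ((V y) i) ((V x) i)),
    Finset.sum_congr rfl (fun i _ => mul_comm (y i) (x i))]
  rw [Fin.sum_univ_castSucc]
  have h1 : ∀ i : Fin m, V x i.castSucc * V y i.castSucc = (x i * y i) / (a * b) := by
    intro i
    rw [hV, hV]
    simp only [Fin.coe_castSucc, i.is_lt, dif_pos]
    rw [div_mul_div_comm, neg_mul_neg]
  have h2 : V x (Fin.last m) * V y (Fin.last m) = 1 / (a * b) := by
    rw [hV, hV]
    simp only [Fin.val_last]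
    rw [dif_neg (lt_irrefl m), dif_neg (lt_irrefl m), div_mul_div_comm, one_mul]
  rw [h2, Finset.sum_congr rfl (fun i _ => h1 i), ← Finset.sum_div,
    ← add_div, add_comm]

/-- The map `V : ℝ^(n-1) → ℝ^n`, `V(x') = (-x', 1)/√(1+|x'|²)`,
is Lipschitz with constant 1. Here `m = n - 1 ≥ 1`. -/
theorem stmt0 (m : ℕ) (hm : 1 ≤ m)
    (V : EuclideanSpace ℝ (Fin m) → EuclideanSpace ℝ (Fin (m + 1)))
    (hV : ∀ (x : EuclideanSpace ℝ (Fin m)) (i : Fin (m + 1)),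
      V x i = (if h : (i : ℕ) < m then -x ⟨i, h⟩ else 1) / Real.sqrt (1 + ‖x‖ ^ 2)) :
    LipschitzWith 1 V := by
  have key := stmt0_inner m V hV
  have hnorm : ∀ x : EuclideanSpace ℝ (Fin m), ‖V x‖^2 = 1 := by
    intro x
    rw [← real_inner_self_eq_norm_sq, key x x, real_inner_self_eq_norm_sq,
      Real.mul_self_sqrt (by positivity)]
    exact div_self (by positivity)
  apply LipschitzWith.of_dist_le_mul
  intro x y
  rw [NNReal.coe_one, one_mul, dist_eq_norm, dist_eq_norm]
  have hsq : ‖V x - V y‖^2 ≤ ‖x - y‖^2 := by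
    rw [norm_sub_sq_real, norm_sub_sq_real, hnorm, hnorm, key]
    have hs : (inner ℝ x y : ℝ) ≤ ‖x‖ * ‖y‖ := real_inner_le_norm x y
    have := stmt0_real_ineq ‖x‖ ‖y‖ (inner ℝ x y) (norm_nonneg _) (norm_nonneg _) hs
      _ _ rfl rfl
    rw [mul_div_assoc] at this
    linarith
  exact (pow_le_pow_iff_left₀ (norm_nonneg _) (norm_nonneg _) two_ne_zero).1 hsq
end

section
/- Let E ⊆ ℝ^n be a set of finite perimeter and finite volume, and suppose B_r(x) ⊆ E. Then for every λ ≥ n/r and every measurable F ⊆ E of finite perimeter, P(F ∪ B_r(x)) + λ|E ∖ (F ∪ B_r(x))| ≤ P(F) + λ|E ∖ F|. Moreover, if λ > n/r and equality holds, then |B_r(x) ∖ F| = 0. -/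
open MeasureTheory Metric Set
open scoped ENNReal

/-- The perimeter of `E` relative to `U ⊆ ℝ^n`, via the classical supremum over
compactly supported `C¹` vector fields of norm at most one. -/
noncomputable def perim (n : ℕ) (E U : Set (EuclideanSpace ℝ (Fin n))) : ℝ≥0∞ :=
  ⨆ (φ : EuclideanSpace ℝ (Fin n) → EuclideanSpace ℝ (Fin n)) (_ : ContDiff ℝ 1 φ)
    (_ : HasCompactSupport φ) (_ : tsupport φ ⊆ U) (_ : ∀ x, ‖φ x‖ ≤ 1),
    ENNReal.ofReal (∫ x in E, ∑ i, fderiv ℝ φ x (EuclideanSpace.single i 1) i)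

noncomputable def divFn {N : ℕ} (X : EuclideanSpace ℝ (Fin N) → EuclideanSpace ℝ (Fin N))
    (y : EuclideanSpace ℝ (Fin N)) : ℝ :=
  ∑ i, fderiv ℝ X y (EuclideanSpace.single i 1) i

lemma divFn_continuous {N : ℕ} {X : EuclideanSpace ℝ (Fin N) → EuclideanSpace ℝ (Fin N)}
    (h1 : ContDiff ℝ 1 X) : Continuous (divFn X) := by
  refine continuous_finset_sum _ fun i _ => ?_
  exact (EuclideanSpace.proj i).continuous.comp
    (((h1.continuous_fderiv one_ne_zero).clm_apply continuous_const))

lemma divFn_support {N : ℕ} {X : EuclideanSpace ℝ (Fin N) → EuclideanSpace ℝ (Fin N)}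
    (y : EuclideanSpace ℝ (Fin N)) (hy : y ∉ tsupport X) : divFn X y = 0 := by
  have : fderiv ℝ X y = 0 := by
    by_contra h
    exact hy (support_fderiv_subset ℝ h)
  simp [divFn, this]

lemma divFn_integrable {N : ℕ} {X : EuclideanSpace ℝ (Fin N) → EuclideanSpace ℝ (Fin N)}
    (h1 : ContDiff ℝ 1 X) (h2 : HasCompactSupport X) : Integrable (divFn X) := by
  refine (divFn_continuous h1).integrable_of_hasCompactSupport ?_
  refine HasCompactSupport.intro h2 fun y hy => divFn_support y hy

set_option maxHeartbeats 2000000 in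
/-- The integral of the divergence of a compactly supported C¹ vector field vanishes. -/
lemma integral_divFn_eq_zero {m : ℕ}
    (X : EuclideanSpace ℝ (Fin (m+1)) → EuclideanSpace ℝ (Fin (m+1)))
    (h1 : ContDiff ℝ 1 X) (h2 : HasCompactSupport X) :
    ∫ y, divFn X y = 0 := by
  classical
  set eL := EuclideanSpace.equiv (Fin (m+1)) ℝ with heL
  set Y : (Fin (m+1) → ℝ) → (Fin (m+1) → ℝ) := fun z => eL (X (eL.symm z)) with hY
  have hY1 : ContDiff ℝ 1 Y := (eL.contDiff).comp (h1.comp eL.symm.contDiff)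
  have hY2 : HasCompactSupport Y := by
    have : HasCompactSupport (⇑eL ∘ X) := h2.comp_left (by simp)
    exact this.comp_homeomorph eL.symm.toHomeomorph
  -- divergence matches
  have hfd : ∀ z, fderiv ℝ Y z =
      (eL.toContinuousLinearMap.comp (fderiv ℝ X (eL.symm z))).comp
        eL.symm.toContinuousLinearMap := by
    intro z
    have h3 : HasFDerivAt X (fderiv ℝ X (eL.symm z)) (eL.symm z) :=
      (h1.differentiable one_ne_zero (eL.symm z)).hasFDerivAt
    have : HasFDerivAt Y ((eL.toContinuousLinearMap.comp (fderiv ℝ X (eL.symm z))).comp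
        eL.symm.toContinuousLinearMap) z := by
      exact (eL.toContinuousLinearMap.hasFDerivAt.comp _ h3).comp z
        eL.symm.toContinuousLinearMap.hasFDerivAt
    exact this.fderiv
  have hdiv : ∀ z, (∑ i, fderiv ℝ Y z (Pi.single i 1) i) = divFn X (eL.symm z) := by
    intro z
    rw [hfd]
    rfl
  have htrans : ∫ y, divFn X y = ∫ z, ∑ i, fderiv ℝ Y z (Pi.single i 1) i := by
    have hmp := (EuclideanSpace.volume_preserving_symm_measurableEquiv_toLp (Fin (m+1))).symm
    rw [← hmp.integral_comp (MeasurableEquiv.toLp 2 (Fin (m+1) → ℝ)).symm.symm.measurableEmbedding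
      (divFn X)]
    exact integral_congr_ae (Filter.Eventually.of_forall fun z => (hdiv z).symm)
  rw [htrans]
  -- now on the pi type
  obtain ⟨R, hR0, hRs⟩ := hY2.isBounded.subset_ball_lt 0 0
  set a : Fin (m+1) → ℝ := fun _ => -R
  set b : Fin (m+1) → ℝ := fun _ => R
  have hab : a ≤ b := fun i => by simp [a, b]; linarith
  have hsub : tsupport Y ⊆ Icc a b := by
    refine hRs.trans fun z hz => ?_
    simp only [mem_ball, dist_zero_right] at hz
    refine ⟨fun i => ?_, fun i => ?_⟩ <;>
      have := (norm_le_pi_norm z i).trans hz.le <;>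
      simp only [Real.norm_eq_abs, abs_le] at this <;> simp [a, b]
    · linarith [this.1]
    · linarith [this.2]
  have hzero : ∀ z ∉ Icc a b, (∑ i, fderiv ℝ Y z (Pi.single i 1) i) = 0 := by
    intro z hz
    have : fderiv ℝ Y z = 0 := by
      by_contra h
      exact hz (hsub (support_fderiv_subset ℝ h))
    simp [this]
  have hcont : Continuous fun z => ∑ i, fderiv ℝ Y z (Pi.single i 1) i := by
    refine continuous_finset_sum _ fun i _ => ?_
    exact (continuous_apply i).comp ((hY1.continuous_fderiv one_ne_zero).clm_apply continuous_const)
  rw [← setIntegral_eq_integral_of_forall_compl_eq_zero hzero]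
  rw [MeasureTheory.integral_divergence_of_hasFDerivAt_off_countable a b hab Y
    (fun z => fderiv ℝ Y z) ∅ countable_empty (hY1.continuous.continuousOn)
    (fun z _ => (hY1.differentiable one_ne_zero z).hasFDerivAt)
    (hcont.continuousOn.integrableOn_compact isCompact_Icc)]
  refine Finset.sum_eq_zero fun i _ => ?_
  have hface : ∀ (v : Fin (m+1) → ℝ), |v i| = R → Y v = 0 := by
    intro v hv
    refine image_eq_zero_of_notMem_tsupport fun hmem => ?_
    have h0 := hRs hmem
    simp only [mem_ball, dist_zero_right] at h0
    have h2 : ‖v i‖ ≤ ‖v‖ := norm_le_pi_norm v i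
    rw [Real.norm_eq_abs, hv] at h2
    linarith
  have h1 : ∀ w : Fin m → ℝ, Y (i.insertNth (b i) w) i = 0 := fun w => by
    have h0 : Y (i.insertNth (b i) w) = 0 := by
      refine hface _ ?_
      rw [Fin.insertNth_apply_same]
      exact abs_of_pos hR0
    rw [h0]; rfl
  have h2 : ∀ w : Fin m → ℝ, Y (i.insertNth (a i) w) i = 0 := fun w => by
    have h0 : Y (i.insertNth (a i) w) = 0 := by
      refine hface _ ?_
      rw [Fin.insertNth_apply_same]
      show |(-R)| = R
      rw [abs_neg, abs_of_pos hR0]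
    rw [h0]; rfl
  simp only [h1, h2]
  simp


lemma expNegInvGlue_monotone : Monotone expNegInvGlue := by
  intro s t hst
  rcases le_or_gt t 0 with ht | ht
  · rw [expNegInvGlue.zero_of_nonpos (hst.trans ht), expNegInvGlue.zero_of_nonpos ht]
  rcases le_or_gt s 0 with hs | hs
  · rw [expNegInvGlue.zero_of_nonpos hs]
    exact (expNegInvGlue.pos_of_pos ht).le
  · have e1 : expNegInvGlue s = Real.exp (-s⁻¹) := by
      simp [expNegInvGlue, not_le.2 hs]
    have e2 : expNegInvGlue t = Real.exp (-t⁻¹) := by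
      simp [expNegInvGlue, not_le.2 ht]
    rw [e1, e2, Real.exp_le_exp, neg_le_neg_iff]
    exact inv_anti₀ hs hst

lemma smoothTransition_monotone : Monotone Real.smoothTransition := by
  intro s t hst
  unfold Real.smoothTransition
  rw [div_le_div_iff₀ (Real.smoothTransition.pos_denom s) (Real.smoothTransition.pos_denom t)]
  have h1 := expNegInvGlue_monotone hst
  have h2 := expNegInvGlue_monotone (show 1 - t ≤ 1 - s by linarith)
  nlinarith [expNegInvGlue.nonneg s, expNegInvGlue.nonneg t,
    expNegInvGlue.nonneg (1-s), expNegInvGlue.nonneg (1-t)]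

lemma smoothTransition_deriv_nonneg (t : ℝ) : 0 ≤ deriv Real.smoothTransition t := by
  have hd : HasDerivAt Real.smoothTransition (deriv Real.smoothTransition t) t :=
    ((Real.smoothTransition.contDiff (n := 1)).differentiable one_ne_zero t).hasDerivAt
  rw [hasDerivAt_iff_tendsto_slope] at hd
  refine ge_of_tendsto hd ?_
  filter_upwards [self_mem_nhdsWithin] with y hy
  have hy' : y ≠ t := hy
  rcases hy'.lt_or_gt with h | h
  · rw [slope_def_field]
    refine div_nonneg_iff.2 (Or.inr ⟨?_, by linarith⟩)
    have := smoothTransition_monotone h.le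
    linarith
  · rw [slope_def_field]
    refine div_nonneg ?_ (by linarith)
    have := smoothTransition_monotone h.le
    linarith

lemma smoothTransition_deriv_zero_left {t : ℝ} (h : t < 0) : deriv Real.smoothTransition t = 0 := by
  have : Real.smoothTransition =ᶠ[nhds t] (fun _ => 0) := by
    filter_upwards [Iio_mem_nhds h] with y hy
    exact Real.smoothTransition.zero_of_nonpos (le_of_lt hy)
  rw [this.deriv_eq, deriv_const]

lemma smoothTransition_deriv_zero_right {t : ℝ} (h : 1 < t) : deriv Real.smoothTransition t = 0 := by
  have : Real.smoothTransition =ᶠ[nhds t] (fun _ => 1) := by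
    filter_upwards [Ioi_mem_nhds h] with y hy
    exact Real.smoothTransition.one_of_one_le (le_of_lt hy)
  rw [this.deriv_eq, deriv_const]

lemma smoothTransition_deriv_bound : ∃ C : ℝ, 0 ≤ C ∧ ∀ t, deriv Real.smoothTransition t ≤ C := by
  obtain ⟨C, hC⟩ := (isCompact_Icc (a := (0:ℝ)) (b := 1)).exists_bound_of_continuousOn
    ((Real.smoothTransition.contDiff (n := (2:ℕ))).continuous_deriv (by norm_num)).continuousOn
  refine ⟨max C 0, le_max_right _ _, fun t => ?_⟩
  rcases lt_or_ge t 0 with h | h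
  · rw [smoothTransition_deriv_zero_left h]; exact le_max_right _ _
  rcases le_or_gt t 1 with h1 | h1
  · exact le_trans (le_abs_self _) (le_trans (hC t ⟨h, h1⟩) (le_max_left _ _))
  · rw [smoothTransition_deriv_zero_right h1]; exact le_max_right _ _


lemma annulus_small {m : ℕ} (x : EuclideanSpace ℝ (Fin (m+1))) {r : ℝ} (hr : 0 < r)
    {K δ : ℝ} (hK : 0 ≤ K) (hδ : 0 < δ) :
    ∃ γ : ℝ, 1/2 ≤ γ ∧ γ < 1 ∧
      K * (volume (closedBall x r \ ball x (r*γ))).toReal ≤ δ := by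
  set B₀ : ℝ := (volume (closedBall x r)).toReal with hB₀
  have hB₀0 : 0 ≤ B₀ := ENNReal.toReal_nonneg
  have key : ∀ γ : ℝ, 1/2 ≤ γ → γ < 1 →
      (volume (closedBall x r \ ball x (r*γ))).toReal ≤ B₀ * ((m+1) * (1 - γ)) := by
    intro γ hγ2 hγ1
    have hγ0 : (0:ℝ) ≤ γ := by linarith
    have hsub : ball x (r*γ) ⊆ closedBall x r :=
      (ball_subset_ball (by nlinarith)).trans ball_subset_closedBall
    have hfin : volume (closedBall x r) ≠ ⊤ := (measure_closedBall_lt_top).ne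
    have hdiff : volume (closedBall x r \ ball x (r*γ)) =
        volume (closedBall x r) - volume (ball x (r*γ)) :=
      measure_diff hsub measurableSet_ball.nullMeasurableSet
        ((measure_mono hsub).trans_lt measure_closedBall_lt_top).ne
    rw [hdiff, ENNReal.toReal_sub_of_le (measure_mono hsub) hfin]
    have hball : (volume (ball x (r*γ))).toReal = γ^(m+1) * (volume (ball x r)).toReal := by
      rw [mul_comm r γ, Measure.addHaar_ball_mul volume x hγ0 r]
      rw [ENNReal.toReal_mul, ENNReal.toReal_ofReal (by positivity)]
      congr 2
      · rw [finrank_euclideanSpace_fin]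
      · exact (Measure.addHaar_ball_center volume x r).symm
    have hBeq : (volume (ball x r)).toReal = B₀ := by
      rw [hB₀]
      congr 1
      refine le_antisymm (measure_mono ball_subset_closedBall) ?_
      rw [← ball_union_sphere]
      refine le_trans (measure_union_le _ _) ?_
      rw [Measure.addHaar_sphere]
      simp
    have hpow : 1 - ((m+1):ℝ) * (1 - γ) ≤ γ^(m+1) := by
      have h := one_add_mul_le_pow (a := γ - 1) (by linarith) (m+1)
      push_cast at h
      calc 1 - ((m+1):ℝ) * (1-γ) = 1 + (↑m+1) * (γ-1) := by push_cast; ring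
      _ ≤ (1 + (γ-1))^(m+1) := h
      _ = γ^(m+1) := by ring_nf
    have hγN1 : γ^(m+1) ≤ 1 := pow_le_one₀ hγ0 hγ1.le
    rw [hball, hBeq]
    push_cast
    nlinarith
  set γ := max (1/2 : ℝ) (1 - δ / (K * B₀ * (m+1) + 1)) with hγdef
  have hq : 0 < K * B₀ * (m+1) + 1 := by positivity
  have hγ2 : 1/2 ≤ γ := le_max_left _ _
  have hγ1 : γ < 1 := by
    rw [hγdef]
    apply max_lt (by norm_num)
    have : 0 < δ / (K * B₀ * (m+1) + 1) := by positivity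
    linarith
  refine ⟨γ, hγ2, hγ1, ?_⟩
  have h1γ : 1 - γ ≤ δ / (K * B₀ * (m+1) + 1) := by
    have : 1 - δ / (K * B₀ * (m+1) + 1) ≤ γ := le_max_right _ _
    linarith
  calc K * (volume (closedBall x r \ ball x (r*γ))).toReal
      ≤ K * (B₀ * ((m+1) * (1 - γ))) := by
        apply mul_le_mul_of_nonneg_left (key γ hγ2 hγ1) hK
    _ = (K * B₀ * (m+1)) * (1 - γ) := by ring
    _ ≤ (K * B₀ * (m+1)) * (δ / (K * B₀ * (m+1) + 1)) := by
        apply mul_le_mul_of_nonneg_left h1γ (by positivity)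
    _ ≤ δ := by
        rw [mul_div_assoc']
        rw [div_le_iff₀ hq]
        nlinarith

lemma inner_eq_sum_mul {N : ℕ} (a b : EuclideanSpace ℝ (Fin N)) :
    (inner ℝ a b : ℝ) = ∑ i, a i * b i := by
  simp [PiLp.inner_apply, RCLike.inner_apply, conj_trivial, mul_comm]

lemma inner_single {N : ℕ} (a : EuclideanSpace ℝ (Fin N)) (i : Fin N) :
    (inner ℝ a (EuclideanSpace.single i 1) : ℝ) = a i := by
  rw [inner_eq_sum_mul]
  rw [Finset.sum_eq_single i]
  · simp [EuclideanSpace.single_apply]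
  · intro j _ hj
    simp [EuclideanSpace.single_apply, hj]
  · simp

set_option maxHeartbeats 2000000 in
lemma key_construction {m : ℕ} (x : EuclideanSpace ℝ (Fin (m+1))) {r : ℝ} (hr : 0 < r)
    {F : Set (EuclideanSpace ℝ (Fin (m+1)))} (hFm : MeasurableSet F)
    {φ : EuclideanSpace ℝ (Fin (m+1)) → EuclideanSpace ℝ (Fin (m+1))}
    (hφ1 : ContDiff ℝ 1 φ) (hφ2 : HasCompactSupport φ) (hφ3 : ∀ y, ‖φ y‖ ≤ 1)
    {δ : ℝ} (hδ : 0 < δ) :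
    ∃ ψ : EuclideanSpace ℝ (Fin (m+1)) → EuclideanSpace ℝ (Fin (m+1)),
      ContDiff ℝ 1 ψ ∧ HasCompactSupport ψ ∧ (∀ y, ‖ψ y‖ ≤ 1) ∧
      (∫ y in F ∪ ball x r, divFn φ y) ≤
        (∫ y in F, divFn ψ y) + ((m+1 : ℝ)/r) * (volume (ball x r \ F)).toReal + δ := by
  classical
  obtain ⟨C, hC0, hCb⟩ := smoothTransition_deriv_bound
  set D := deriv Real.smoothTransition with hD
  -- bound on the divergence of φ
  obtain ⟨M, hM⟩ := (HasCompactSupport.intro hφ2 fun y hy => divFn_support y hy :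
      HasCompactSupport (divFn φ)).exists_bound_of_continuous (divFn_continuous hφ1)
  have hM0 : 0 ≤ M := le_trans (norm_nonneg _) (hM x)
  set K : ℝ := 2*C/r + (((m+1):ℝ)/r + M) with hK
  have hK0 : 0 ≤ K := by positivity
  obtain ⟨γ, hγ2, hγ1, hγsmall⟩ := annulus_small x hr hK0 hδ
  have hγ0 : (0:ℝ) < γ := by linarith
  set β : ℝ := 1 - γ^2 with hβ
  have hβ0 : 0 < β := by nlinarith
  set g : ℝ → ℝ := fun v => Real.smoothTransition ((1 - v)/β) with hg
  set u : EuclideanSpace ℝ (Fin (m+1)) → ℝ := fun y => ‖y - x‖^2 / r^2 with hu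
  set η := fun y => g (u y) with hη
  set T := fun y : EuclideanSpace ℝ (Fin (m+1)) => r⁻¹ • (y - x) with hT
  set V := fun y => T y - φ y with hV
  set ψ := fun y => φ y + η y • V y with hψ
  -- basic facts about g and η
  have hg01 : ∀ v, 0 ≤ g v ∧ g v ≤ 1 := fun v =>
    ⟨Real.smoothTransition.nonneg _, Real.smoothTransition.le_one _⟩
  have hg_one : ∀ v, v ≤ γ^2 → g v = 1 := by
    intro v hv
    apply Real.smoothTransition.one_of_one_le
    rw [le_div_iff₀ hβ0]
    simp [hβ]
    linarith
  have hg_zero : ∀ v, 1 ≤ v → g v = 0 := by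
    intro v hv
    apply Real.smoothTransition.zero_of_nonpos
    apply div_nonpos_of_nonpos_of_nonneg <;> linarith
  have hu_ge : ∀ y, y ∉ ball x r → 1 ≤ u y := by
    intro y hy
    simp only [mem_ball, dist_eq_norm, not_lt] at hy
    rw [hu]
    rw [le_div_iff₀ (by positivity)]
    have : 0 ≤ ‖y - x‖ := norm_nonneg _
    nlinarith
  have hη_zero : ∀ y, y ∉ ball x r → η y = 0 := fun y hy => hg_zero _ (hu_ge y hy)
  have hu_lt : ∀ y, y ∈ ball x (r*γ) → u y < γ^2 := by
    intro y hy
    simp only [mem_ball, dist_eq_norm] at hy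
    rw [hu, div_lt_iff₀ (by positivity)]
    have h0 : 0 ≤ ‖y - x‖ := norm_nonneg _
    nlinarith
  -- smoothness
  have hg_cd : ContDiff ℝ 1 g :=
    Real.smoothTransition.contDiff.comp ((contDiff_const.sub contDiff_id).div_const β)
  have hu_cd : ContDiff ℝ 1 u := by
    have : u = fun y => ‖y - x‖^2 * (r^2)⁻¹ := funext fun y => div_eq_mul_inv _ _
    rw [this]
    exact (((contDiff_id.sub contDiff_const).norm_sq ℝ)).mul contDiff_const
  have hη_cd : ContDiff ℝ 1 η := hg_cd.comp hu_cd
  have hT_cd : ContDiff ℝ 1 T := (contDiff_id.sub contDiff_const).const_smul _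
  have hV_cd : ContDiff ℝ 1 V := hT_cd.sub hφ1
  have hψ_cd : ContDiff ℝ 1 ψ := hφ1.add (hη_cd.smul hV_cd)
  -- compact support of η • V and of ψ
  have hηV_supp : HasCompactSupport (fun y => η y • V y) := by
    refine HasCompactSupport.intro (isCompact_closedBall x r) fun y hy => ?_
    rw [hη_zero y (fun h => hy (ball_subset_closedBall h)), zero_smul]
  have hψ_hcs : HasCompactSupport ψ := hφ2.add hηV_supp
  -- norm bound for ψ
  have hψ_norm : ∀ y, ‖ψ y‖ ≤ 1 := by
    intro y
    by_cases hy : y ∈ ball x r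
    · have hyd : ‖y - x‖ < r := by simpa [dist_eq_norm] using hy
      have hψy : ψ y = (1 - η y) • φ y + η y • T y := by
        rw [hψ]
        simp only [hV]
        rw [smul_sub, sub_smul, one_smul]
        abel
      have hTy : ‖T y‖ ≤ 1 := by
        rw [hT]
        simp only [norm_smul, norm_inv, Real.norm_eq_abs, abs_of_pos hr]
        rw [inv_mul_le_iff₀ hr, mul_one]
        exact hyd.le
      have h01 := hg01 (u y)
      calc ‖ψ y‖ ≤ ‖(1 - η y) • φ y‖ + ‖η y • T y‖ := by rw [hψy]; exact norm_add_le _ _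
        _ = |1 - η y| * ‖φ y‖ + |η y| * ‖T y‖ := by
            simp [norm_smul, Real.norm_eq_abs]
        _ ≤ (1 - η y) * 1 + η y * 1 := by
            rw [abs_of_nonneg (by simp only [hη]; linarith [h01.2]),
              abs_of_nonneg (by simp only [hη]; linarith [h01.1])]
            gcongr
            · simp only [hη]; linarith [h01.1]
            · exact hφ3 y
            · simp only [hη]; linarith [h01.1]
        _ = 1 := by ring
    · have := hη_zero y hy
      rw [hψ]
      simp only [this, zero_smul, add_zero]
      exact hφ3 y
  -- derivatives
  set c : EuclideanSpace ℝ (Fin (m+1)) → ℝ :=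
    fun y => (-β⁻¹ * D ((1 - u y)/β)) * (2/r^2) with hc
  have hgd : ∀ v, HasDerivAt g (-β⁻¹ * D ((1-v)/β)) v := by
    intro v
    have h1 : HasDerivAt (fun w : ℝ => (1 - w)/β) (-β⁻¹) v := by
      have := ((hasDerivAt_id v).const_sub 1).div_const β
      convert! this using 1
      simp [div_eq_mul_inv]
    have h2 : HasDerivAt Real.smoothTransition (D ((1-v)/β)) ((1-v)/β) :=
      ((Real.smoothTransition.contDiff (n := 1)).differentiable one_ne_zero ((1-v)/β)).hasDerivAt
    have h3 := h2.comp v h1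
    convert! h3 using 1
    ring
  have hud : ∀ y, HasFDerivAt u ((2/r^2) • (innerSL ℝ (y - x))) y := by
    intro y
    have h1 := ((hasFDerivAt_id y).sub_const x).norm_sq
    have h2 := h1.const_smul ((r^2)⁻¹)
    have h2' : HasFDerivAt u ((r^2)⁻¹ • (2 • ((innerSL ℝ) (id y - x)).comp
        (ContinuousLinearMap.id ℝ (EuclideanSpace ℝ (Fin (m+1)))))) y := by
      refine h2.congr_of_eventuallyEq (Filter.Eventually.of_forall fun z => ?_)
      rw [hu]
      simp [div_eq_inv_mul, smul_eq_mul]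
    convert h2' using 1
    ext v
    simp only [ContinuousLinearMap.smul_apply, ContinuousLinearMap.coe_smul', Pi.smul_apply,
      ContinuousLinearMap.coe_comp', Function.comp_apply, ContinuousLinearMap.coe_id', id_eq,
      smul_eq_mul, nsmul_eq_mul, Nat.cast_ofNat]
    ring
  have hηd : ∀ y, HasFDerivAt η (c y • (innerSL ℝ (y - x))) y := by
    intro y
    have h3 := (hgd (u y)).comp_hasFDerivAt y (hud y)
    convert! h3 using 1
    rw [hc, smul_smul]
  have hφd : ∀ y, HasFDerivAt φ (fderiv ℝ φ y) y :=
    fun y => (hφ1.differentiable one_ne_zero y).hasFDerivAt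
  have hVd : ∀ y, HasFDerivAt V
      (r⁻¹ • (ContinuousLinearMap.id ℝ (EuclideanSpace ℝ (Fin (m+1)))) - fderiv ℝ φ y) y :=
    fun y => (((hasFDerivAt_id y).sub_const x).const_smul r⁻¹).sub (hφd y)
  have hηVd : ∀ y, HasFDerivAt (fun z => η z • V z)
      (η y • (r⁻¹ • (ContinuousLinearMap.id ℝ (EuclideanSpace ℝ (Fin (m+1)))) - fderiv ℝ φ y)
        + (c y • (innerSL ℝ (y-x))).smulRight (V y)) y :=
    fun y => (hηd y).smul (hVd y)
  have hψd : ∀ y, HasFDerivAt ψ (fderiv ℝ φ y +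
      (η y • (r⁻¹ • (ContinuousLinearMap.id ℝ (EuclideanSpace ℝ (Fin (m+1)))) - fderiv ℝ φ y)
        + (c y • (innerSL ℝ (y-x))).smulRight (V y))) y :=
    fun y => (hφd y).add (hηVd y)
  -- divergence identities
  set G : EuclideanSpace ℝ (Fin (m+1)) → ℝ := fun y => c y * (inner ℝ (y - x) (V y) : ℝ) with hG
  set dv : EuclideanSpace ℝ (Fin (m+1)) → ℝ := fun y => ((m+1):ℝ)/r - divFn φ y with hdv
  set w : EuclideanSpace ℝ (Fin (m+1)) → ℝ := fun y => η y * dv y + G y with hw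
  have hdiv_ηV : ∀ y, divFn (fun z => η z • V z) y = w y := by
    intro y
    simp only [divFn]
    rw [(hηVd y).fderiv]
    have expand : ∀ i : Fin (m+1),
        ((η y • (r⁻¹ • (ContinuousLinearMap.id ℝ (EuclideanSpace ℝ (Fin (m+1)))) - fderiv ℝ φ y)
        + (c y • (innerSL ℝ (y-x))).smulRight (V y)) (EuclideanSpace.single i 1)) i
        = η y * (r⁻¹ * (EuclideanSpace.single i (1:ℝ) i)
            - fderiv ℝ φ y (EuclideanSpace.single i 1) i)
          + c y * ((y - x) i * V y i) := by
      intro i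
      simp only [ContinuousLinearMap.add_apply, ContinuousLinearMap.coe_smul', Pi.smul_apply,
        ContinuousLinearMap.coe_sub', Pi.sub_apply, ContinuousLinearMap.coe_id', id_eq,
        ContinuousLinearMap.smulRight_apply, ContinuousLinearMap.smul_apply,
        innerSL_apply_apply]
      rw [inner_single]
      simp only [PiLp.add_apply, PiLp.smul_apply, PiLp.sub_apply, smul_eq_mul]
      ring
    rw [Finset.sum_congr rfl fun i _ => expand i]
    rw [Finset.sum_add_distrib]
    have e1 : ∑ i : Fin (m+1), η y * (r⁻¹ * (EuclideanSpace.single i (1:ℝ) i)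
        - fderiv ℝ φ y (EuclideanSpace.single i 1) i) = η y * dv y := by
      rw [← Finset.mul_sum]
      congr 1
      simp only [hdv, divFn]
      rw [Finset.sum_sub_distrib]
      congr 1
      have : ∀ i : Fin (m+1), r⁻¹ * (EuclideanSpace.single i (1:ℝ) i) = r⁻¹ := by
        intro i
        rw [EuclideanSpace.single_apply, if_pos rfl, mul_one]
      rw [Finset.sum_congr rfl fun i _ => this i]
      simp [Finset.sum_const, div_eq_mul_inv, mul_comm]
    have e2 : ∑ i : Fin (m+1), c y * ((y - x) i * V y i) = G y := by
      simp only [hG, inner_eq_sum_mul, Finset.mul_sum]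
    rw [e1, e2, hw]
  have hdiv_ψ : ∀ y, divFn ψ y = divFn φ y + w y := by
    intro y
    rw [← hdiv_ηV y]
    simp only [divFn]
    rw [(hψd y).fderiv, (hηVd y).fderiv, ← Finset.sum_add_distrib]
    refine Finset.sum_congr rfl fun i _ => ?_
    simp only [ContinuousLinearMap.add_apply, PiLp.add_apply]
  refine ⟨ψ, hψ_cd, hψ_hcs, hψ_norm, ?_⟩
  -- continuity / integrability package
  have hdv_cont : Continuous dv := continuous_const.sub (divFn_continuous hφ1)
  have hD_cont : Continuous D :=
    (Real.smoothTransition.contDiff (n := (2:ℕ))).continuous_deriv (by norm_num)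
  have hc_cont : Continuous c := by
    apply Continuous.mul ?_ continuous_const
    apply Continuous.mul continuous_const
    exact hD_cont.comp (((continuous_const.sub ((hu_cd.continuous))).div_const β))
  have hG_cont : Continuous G :=
    hc_cont.mul ((continuous_id.sub continuous_const).inner (hV_cd.continuous))
  have hc_zero_far : ∀ y, r < ‖y - x‖ → c y = 0 := by
    intro y hy
    have hu1 : 1 < u y := by
      rw [hu, lt_div_iff₀ (by positivity)]
      nlinarith [norm_nonneg (y - x)]
    simp only [hc, hD]
    rw [smoothTransition_deriv_zero_left (by apply div_neg_of_neg_of_pos <;> [linarith; exact hβ0])]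
    ring
  have hc_zero_near : ∀ y, ‖y - x‖ < r*γ → c y = 0 := by
    intro y hy
    have hu1 : u y < γ^2 := by
      rw [hu, div_lt_iff₀ (by positivity)]
      nlinarith [norm_nonneg (y - x)]
    simp only [hc, hD]
    rw [smoothTransition_deriv_zero_right (by rw [lt_div_iff₀ hβ0]; rw [hβ] at *; linarith)]
    ring
  have hG_supp : HasCompactSupport G := by
    refine HasCompactSupport.intro (isCompact_closedBall x r) fun y hy => ?_
    show c y * (inner ℝ (y - x) (V y) : ℝ) = 0
    rw [hc_zero_far y (by simpa [dist_eq_norm] using hy), zero_mul]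
  have hG_int : Integrable G := hG_cont.integrable_of_hasCompactSupport hG_supp
  have hηdv_cont : Continuous (fun y => η y * dv y) := (hη_cd.continuous).mul hdv_cont
  have hηdv_supp : HasCompactSupport (fun y => η y * dv y) := by
    refine HasCompactSupport.intro (isCompact_closedBall x r) fun y hy => ?_
    show η y * dv y = 0
    rw [hη_zero y (fun h => hy (ball_subset_closedBall h)), zero_mul]
  have hηdv_int : Integrable (fun y => η y * dv y) :=
    hηdv_cont.integrable_of_hasCompactSupport hηdv_supp
  have hw_int : Integrable w := by
    have := hηdv_int.add hG_int
    exact this.congr (Filter.Eventually.of_forall fun y => rfl)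
  have hd_int : Integrable (divFn φ) := divFn_integrable hφ1 hφ2
  have hψdiv_int : Integrable (divFn ψ) := divFn_integrable hψ_cd hψ_hcs
  have hw0 : ∫ y, w y = 0 := by
    rw [← integral_divFn_eq_zero _ (hη_cd.smul hV_cd) hηV_supp]
    exact integral_congr_ae (Filter.Eventually.of_forall fun y => (hdiv_ηV y).symm)
  -- sets
  set s : Set (EuclideanSpace ℝ (Fin (m+1))) := ball x r \ F with hs
  set A : Set (EuclideanSpace ℝ (Fin (m+1))) := closedBall x r \ ball x (r*γ) with hA
  have hsm : MeasurableSet s := measurableSet_ball.diff hFm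
  have hAm : MeasurableSet A := measurableSet_closedBall.diff measurableSet_ball
  have hsfin : volume s ≠ ⊤ := (lt_of_le_of_lt (measure_mono diff_subset) measure_ball_lt_top).ne
  -- step 1
  have step1 : ∫ y in F ∪ ball x r, divFn φ y
      = (∫ y in F, divFn φ y) + ∫ y in s, divFn φ y := by
    rw [← union_diff_self]
    exact setIntegral_union disjoint_sdiff_self_right hsm hd_int.integrableOn hd_int.integrableOn
  -- step 4
  have hdv_intOn : IntegrableOn dv s := (integrableOn_const (lt_of_le_of_lt
      (measure_mono diff_subset) measure_ball_lt_top).ne).sub hd_int.integrableOn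
  have step4 : ∫ y in s, divFn φ y
      = ((m+1):ℝ)/r * (volume s).toReal - ∫ y in s, dv y := by
    have hcongr : ∀ y ∈ s, divFn φ y = ((m+1):ℝ)/r - dv y := by
      intro y _
      rw [hdv]; ring
    rw [setIntegral_congr_fun hsm hcongr]
    rw [integral_sub (integrableOn_const (C := ((m+1):ℝ)/r) (lt_of_le_of_lt
      (measure_mono diff_subset) measure_ball_lt_top).ne) hdv_intOn]
    rw [setIntegral_const, smul_eq_mul, mul_comm, measureReal_def]
  -- step 2
  have step2 : ∫ y in F, divFn ψ y = (∫ y in F, divFn φ y) + ∫ y in F, w y := by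
    have hcongr : ∀ y ∈ F, divFn ψ y = divFn φ y + w y := fun y _ => hdiv_ψ y
    rw [setIntegral_congr_fun hFm hcongr]
    exact integral_add hd_int.integrableOn hw_int.integrableOn
  -- step 3
  have step3 : ∫ y in F, w y = - ∫ y in Fᶜ, w y := by
    have := integral_add_compl hFm hw_int
    rw [hw0] at this
    linarith
  -- step 5
  have hdvbound : ∀ y, |dv y| ≤ ((m+1):ℝ)/r + M := by
    intro y
    rw [hdv]
    have := hM y
    rw [Real.norm_eq_abs] at this
    have h1 : 0 ≤ ((m+1):ℝ)/r := by positivity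
    rw [abs_le]
    constructor <;> [nlinarith [abs_le.1 this]; nlinarith [abs_le.1 this]]
  have hb1 : ∫ y in s, (η y - 1) * dv y ≤ (((m+1):ℝ)/r + M) * (volume A).toReal := by
    have hpt : ∀ y ∈ s, (η y - 1) * dv y ≤ A.indicator (fun _ => ((m+1):ℝ)/r + M) y := by
      intro y hy
      by_cases hnear : y ∈ ball x (r*γ)
      · have h1 : η y = 1 := hg_one _ (hu_lt y hnear).le
        rw [h1, sub_self, zero_mul]
        exact indicator_nonneg (fun _ _ => by positivity) y
      · have hyA : y ∈ A := ⟨ball_subset_closedBall hy.1, hnear⟩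
        rw [indicator_of_mem hyA]
        have h01 := hg01 (u y)
        have hb := hdvbound y
        have h1 : |η y - 1| ≤ 1 := by
          rw [abs_le]
          constructor <;> simp only [hη] <;> [linarith [h01.2]; linarith [h01.1]]
        calc (η y - 1) * dv y ≤ |(η y - 1) * dv y| := le_abs_self _
          _ = |η y - 1| * |dv y| := abs_mul _ _
          _ ≤ 1 * (((m+1):ℝ)/r + M) :=
              mul_le_mul h1 hb (abs_nonneg _) zero_le_one
          _ = ((m+1):ℝ)/r + M := one_mul _
    have hint1 : IntegrableOn (fun y => (η y - 1) * dv y) s :=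
      (((hη_cd.continuous.sub continuous_const).mul hdv_cont).continuousOn.integrableOn_compact
        (isCompact_closedBall x r)).mono_set (fun y hy => ball_subset_closedBall hy.1)
    have hint2 : Integrable (A.indicator (fun _ => ((m+1):ℝ)/r + M)) :=
      (integrable_indicator_iff hAm).2 (integrableOn_const (lt_of_le_of_lt
        (measure_mono diff_subset) measure_closedBall_lt_top).ne)
    calc ∫ y in s, (η y - 1) * dv y
        ≤ ∫ y in s, A.indicator (fun _ => ((m+1):ℝ)/r + M) y :=
          setIntegral_mono_on hint1 hint2.integrableOn hsm hpt
      _ ≤ ∫ y, A.indicator (fun _ => ((m+1):ℝ)/r + M) y :=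
          setIntegral_le_integral hint2
            (Filter.Eventually.of_forall fun y => indicator_nonneg (fun _ _ => by positivity) y)
      _ = (((m+1):ℝ)/r + M) * (volume A).toReal := by
          rw [integral_indicator_const _ hAm, smul_eq_mul, mul_comm, measureReal_def]
  have hGb : ∀ y, G y ≤ A.indicator (fun _ => 2*C/r) y := by
    intro y
    by_cases hyA : y ∈ A
    · rw [indicator_of_mem hyA]
      obtain ⟨hy1', hy2'⟩ := hyA
      have hy1 : ‖y - x‖ ≤ r := by simpa [dist_eq_norm] using hy1'
      have hy2 : r * γ ≤ ‖y - x‖ := by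
        simp only [mem_ball, dist_eq_norm, not_lt] at hy2'
        exact hy2'
      have hDσ : 0 ≤ D ((1 - u y)/β) := by rw [hD]; exact smoothTransition_deriv_nonneg _
      have hDσC := hCb ((1 - u y)/β)
      have hinner_eq : (inner ℝ (y - x) (V y) : ℝ)
          = r⁻¹ * ‖y - x‖^2 - (inner ℝ (y - x) (φ y) : ℝ) := by
        simp only [hV, hT]
        rw [inner_sub_right, real_inner_smul_right, real_inner_self_eq_norm_sq]
      have hip : (inner ℝ (y - x) (φ y) : ℝ) ≤ ‖y - x‖ := by
        calc (inner ℝ (y-x) (φ y) : ℝ) ≤ |(inner ℝ (y-x) (φ y) : ℝ)| := le_abs_self _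
          _ ≤ ‖y - x‖ * ‖φ y‖ := abs_real_inner_le_norm _ _
          _ ≤ ‖y - x‖ * 1 := by gcongr; exact hφ3 y
          _ = ‖y - x‖ := mul_one _
      have hlow : -(r * (1 - γ)) ≤ (inner ℝ (y - x) (V y) : ℝ) := by
        rw [hinner_eq]
        have h0 : 0 ≤ ‖y - x‖ := norm_nonneg _
        have hfac : 0 ≤ ‖y-x‖^2 - r*‖y-x‖ + r^2*(1-γ) := by
          nlinarith [mul_le_mul hy1 (show r - ‖y-x‖ ≤ r*(1-γ) by nlinarith) (by linarith) hr.le]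
        have heq : r⁻¹ * ‖y-x‖^2 - ‖y-x‖ + r * (1-γ)
            = (‖y-x‖^2 - r*‖y-x‖ + r^2*(1-γ)) * r⁻¹ := by
          field_simp
        have : 0 ≤ r⁻¹ * ‖y-x‖^2 - ‖y-x‖ + r * (1-γ) := by
          rw [heq]
          positivity
        linarith [hip]
      have hc_le : c y ≤ 0 := by
        simp only [hc]
        have hβinv : 0 < β⁻¹ := by positivity
        have h2r : 0 < 2/r^2 := by positivity
        have h3 : 0 ≤ β⁻¹ * D ((1 - u y)/β) := mul_nonneg hβinv.le hDσ
        nlinarith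
      have hstep : G y ≤ c y * (-(r * (1-γ))) := by
        show c y * (inner ℝ (y - x) (V y) : ℝ) ≤ _
        exact mul_le_mul_of_nonpos_left hlow hc_le
      refine le_trans hstep ?_
      have hβγ : β⁻¹ * (1-γ) ≤ 1 := by
        rw [← div_eq_inv_mul, div_le_one hβ0, hβ]
        nlinarith
      have hexp : c y * (-(r * (1-γ)))
          = (D ((1 - u y)/β) * (β⁻¹ * (1-γ))) * (2/r) := by
        simp only [hc]
        field_simp
      rw [hexp]
      have h1 : D ((1 - u y)/β) * (β⁻¹ * (1-γ)) ≤ C * 1 := by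
        apply mul_le_mul hDσC hβγ (mul_nonneg (by positivity) (by linarith)) hC0
      calc (D ((1 - u y)/β) * (β⁻¹ * (1-γ))) * (2/r) ≤ (C * 1) * (2/r) := by
            apply mul_le_mul_of_nonneg_right h1 (by positivity)
        _ = 2*C/r := by ring
    · rw [indicator_of_notMem hyA]
      have hc0 : c y = 0 := by
        by_cases h1 : ‖y - x‖ ≤ r
        · refine hc_zero_near y ?_
          by_contra h2
          exact hyA ⟨by simpa [mem_closedBall, dist_eq_norm] using h1,
            by simpa [mem_ball, dist_eq_norm] using h2⟩
        · exact hc_zero_far y (not_le.1 h1)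
      show c y * (inner ℝ (y - x) (V y) : ℝ) ≤ 0
      rw [hc0, zero_mul]
  have hb2 : ∫ y in Fᶜ, G y ≤ (2*C/r) * (volume A).toReal := by
    have hint2 : Integrable (A.indicator (fun _ => 2*C/r)) :=
      (integrable_indicator_iff hAm).2 (integrableOn_const (lt_of_le_of_lt
        (measure_mono diff_subset) measure_closedBall_lt_top).ne)
    calc ∫ y in Fᶜ, G y ≤ ∫ y in Fᶜ, A.indicator (fun _ => 2*C/r) y :=
          setIntegral_mono_on hG_int.integrableOn hint2.integrableOn hFm.compl
            (fun y _ => hGb y)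
      _ ≤ ∫ y, A.indicator (fun _ => 2*C/r) y :=
          setIntegral_le_integral hint2
            (Filter.Eventually.of_forall fun y => indicator_nonneg (fun _ _ => by positivity) y)
      _ = (2*C/r) * (volume A).toReal := by
          rw [integral_indicator_const _ hAm, smul_eq_mul, mul_comm, measureReal_def]
  have step5 : (∫ y in Fᶜ, w y) - (∫ y in s, dv y) ≤ δ := by
    have hsplit : (∫ y in Fᶜ, w y) = (∫ y in Fᶜ, η y * dv y) + ∫ y in Fᶜ, G y := by
      have : (∫ y in Fᶜ, w y) = ∫ y in Fᶜ, (η y * dv y + G y) := rfl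
      rw [this]
      exact integral_add hηdv_int.integrableOn hG_int.integrableOn
    have hFc : (Fᶜ : Set (EuclideanSpace ℝ (Fin (m+1)))) = s ∪ (Fᶜ \ ball x r) := by
      simp only [hs]
      ext y
      simp only [mem_union, mem_compl_iff, mem_diff]
      tauto
    have hdisj : Disjoint s (Fᶜ \ ball x r) := by
      simp only [hs]
      exact disjoint_left.2 fun y hy1 hy2 => hy2.2 hy1.1
    have hη0' : ∫ y in Fᶜ \ ball x r, η y * dv y = 0 := by
      have hz : ∀ y ∈ (Fᶜ \ ball x r : Set (EuclideanSpace ℝ (Fin (m+1)))),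
          η y * dv y = 0 := fun y hy => by rw [hη_zero y hy.2, zero_mul]
      rw [setIntegral_congr_fun (hFm.compl.diff measurableSet_ball) hz]
      simp
    have hηdv_split : (∫ y in Fᶜ, η y * dv y) = ∫ y in s, η y * dv y := by
      rw [hFc, setIntegral_union hdisj (hFm.compl.diff measurableSet_ball)
        hηdv_int.integrableOn hηdv_int.integrableOn, hη0', add_zero]
    have hsub : (∫ y in s, η y * dv y) - (∫ y in s, dv y)
        = ∫ y in s, (η y - 1) * dv y := by
      rw [← integral_sub hηdv_int.integrableOn hdv_intOn]
      refine setIntegral_congr_fun hsm fun y _ => ?_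
      ring
    have hKA : (((m+1):ℝ)/r + M) * (volume A).toReal + (2*C/r) * (volume A).toReal ≤ δ := by
      have : (((m+1):ℝ)/r + M) * (volume A).toReal + (2*C/r) * (volume A).toReal
          = K * (volume A).toReal := by rw [hK]; ring
      rw [this]
      exact hγsmall
    rw [hsplit, hηdv_split]
    linarith [hb1, hb2, hsub]
  -- assemble
  rw [step1, step4, step2, step3]
  have : (volume (ball x r \ F)).toReal = (volume s).toReal := by rw [hs]
  rw [this]
  linarith [step5]


lemma perim_union_ball_le {m : ℕ} (x : EuclideanSpace ℝ (Fin (m+1))) {r : ℝ} (hr : 0 < r)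
    {F : Set (EuclideanSpace ℝ (Fin (m+1)))} (hFm : MeasurableSet F)
    (hFper : perim (m+1) F Set.univ < ⊤) :
    perim (m+1) (F ∪ ball x r) Set.univ ≤ perim (m+1) F Set.univ
      + ENNReal.ofReal (((m:ℝ)+1)/r) * volume (ball x r \ F) := by
  have hvfin : volume (ball x r \ F) ≠ ⊤ :=
    (lt_of_le_of_lt (measure_mono diff_subset) measure_ball_lt_top).ne
  rw [perim]
  refine iSup_le fun φ => iSup_le fun hφ1 => iSup_le fun hφ2 =>
    iSup_le fun _ => iSup_le fun hφ3 => ?_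
  refine ENNReal.le_of_forall_pos_le_add fun ε hε hfin => ?_
  obtain ⟨ψ, hψ1, hψ2, hψ3, hineq⟩ :=
    key_construction x hr hFm hφ1 hφ2 hφ3 (δ := (ε:ℝ)) (by exact_mod_cast hε)
  have hψper : ENNReal.ofReal (∫ y in F, divFn ψ y) ≤ perim (m+1) F Set.univ := by
    rw [perim]
    refine le_iSup_of_le ψ (le_iSup_of_le hψ1 (le_iSup_of_le hψ2
      (le_iSup_of_le (Set.subset_univ _) (le_iSup_of_le hψ3 le_rfl))))
  have h0 : ENNReal.ofReal (∫ y in F ∪ ball x r,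
      ∑ i, fderiv ℝ φ y (EuclideanSpace.single i 1) i) =
      ENNReal.ofReal (∫ y in F ∪ ball x r, divFn φ y) := rfl
  rw [h0]
  calc ENNReal.ofReal (∫ y in F ∪ ball x r, divFn φ y)
      ≤ ENNReal.ofReal ((∫ y in F, divFn ψ y)
          + ((m+1 : ℝ)/r) * (volume (ball x r \ F)).toReal + (ε:ℝ)) :=
        ENNReal.ofReal_le_ofReal hineq
    _ ≤ ENNReal.ofReal ((∫ y in F, divFn ψ y)
          + ((m+1 : ℝ)/r) * (volume (ball x r \ F)).toReal) + ENNReal.ofReal (ε:ℝ) :=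
        ENNReal.ofReal_add_le
    _ ≤ ENNReal.ofReal (∫ y in F, divFn ψ y)
          + ENNReal.ofReal (((m+1 : ℝ)/r) * (volume (ball x r \ F)).toReal)
          + ENNReal.ofReal (ε:ℝ) := by
        exact add_le_add_left ENNReal.ofReal_add_le _
    _ ≤ perim (m+1) F Set.univ + ENNReal.ofReal (((m:ℝ)+1)/r) * volume (ball x r \ F)
          + ε := by
        refine add_le_add (add_le_add hψper ?_) ?_
        · rw [ENNReal.ofReal_mul (by positivity)]
          rw [ENNReal.ofReal_toReal hvfin]
        · rw [ENNReal.ofReal_coe_nnreal]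

/-- minimizers contain balls: if `B_r(x) ⊆ E`, `λ ≥ n/r`, then for every
measurable `F ⊆ E` of finite perimeter one has
`P(F ∪ B_r(x)) + λ|E ∖ (F ∪ B_r(x))| ≤ P(F) + λ|E ∖ F|`; if `λ > n/r`, equality forces
`|B_r(x) ∖ F| = 0`. -/
theorem stmt11 (n : ℕ) (hn : 2 ≤ n) (E : Set (EuclideanSpace ℝ (Fin n)))
    (hEm : MeasurableSet E) (hEper : perim n E Set.univ < ⊤) (hEvol : volume E < ⊤)
    (x : EuclideanSpace ℝ (Fin n)) (r : ℝ) (hr : 0 < r) (hball : ball x r ⊆ E)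
    (l : ℝ) (hl : (n : ℝ) / r ≤ l)
    (F : Set (EuclideanSpace ℝ (Fin n))) (hFm : MeasurableSet F) (hFE : F ⊆ E)
    (hFper : perim n F Set.univ < ⊤) :
    perim n (F ∪ ball x r) Set.univ +
        ENNReal.ofReal l * volume (E \ (F ∪ ball x r)) ≤
      perim n F Set.univ + ENNReal.ofReal l * volume (E \ F) ∧
    ((n : ℝ) / r < l →
      perim n (F ∪ ball x r) Set.univ +
          ENNReal.ofReal l * volume (E \ (F ∪ ball x r)) =
        perim n F Set.univ + ENNReal.ofReal l * volume (E \ F) →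
      volume (ball x r \ F) = 0) := by
  obtain ⟨m, rfl⟩ : ∃ m, n = m + 1 := ⟨n - 1, by omega⟩
  have hcast : ((m+1 : ℕ) : ℝ) = (m:ℝ)+1 := by push_cast; ring
  have hvol_split : volume (E \ F)
      = volume (E \ (F ∪ ball x r)) + volume (ball x r \ F) := by
    have hsets : E \ F = (E \ (F ∪ ball x r)) ∪ (ball x r \ F) := by
      ext y
      simp only [Set.mem_diff, Set.mem_union]
      constructor
      · rintro ⟨hE, hF⟩
        by_cases hy : y ∈ ball x r
        · exact Or.inr ⟨hy, hF⟩
        · exact Or.inl ⟨hE, fun h => h.elim hF hy⟩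
      · rintro (⟨h1, h2⟩ | ⟨h1, h2⟩)
        · exact ⟨h1, fun h => h2 (Or.inl h)⟩
        · exact ⟨hball h1, h2⟩
    rw [hsets, measure_union ?_ (measurableSet_ball.diff hFm)]
    exact Set.disjoint_left.2 fun y hy1 hy2 => hy1.2 (Or.inr hy2.1)
  have hper := perim_union_ball_le x hr hFm hFper
  have hvBF_fin : volume (ball x r \ F) ≠ ⊤ :=
    (lt_of_le_of_lt (measure_mono diff_subset) measure_ball_lt_top).ne
  have hEFB_fin : volume (E \ (F ∪ ball x r)) ≠ ⊤ :=
    (lt_of_le_of_lt (measure_mono diff_subset) hEvol).ne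
  have hofl : ENNReal.ofReal (((m:ℝ)+1)/r) ≤ ENNReal.ofReal l := by
    apply ENNReal.ofReal_le_ofReal
    rw [hcast] at hl
    exact hl
  have hle1 : perim (m+1) (F ∪ ball x r) Set.univ +
      ENNReal.ofReal l * volume (E \ (F ∪ ball x r)) ≤
      perim (m+1) F Set.univ + ENNReal.ofReal l * volume (E \ F) := by
    calc perim (m+1) (F ∪ ball x r) Set.univ +
        ENNReal.ofReal l * volume (E \ (F ∪ ball x r))
        ≤ (perim (m+1) F Set.univ
            + ENNReal.ofReal (((m:ℝ)+1)/r) * volume (ball x r \ F))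
          + ENNReal.ofReal l * volume (E \ (F ∪ ball x r)) :=
          add_le_add_left hper _
      _ ≤ (perim (m+1) F Set.univ + ENNReal.ofReal l * volume (ball x r \ F))
          + ENNReal.ofReal l * volume (E \ (F ∪ ball x r)) := by
          refine add_le_add_left (add_le_add_right ?_ _) _
          exact mul_le_mul_left hofl _
      _ = perim (m+1) F Set.univ + ENNReal.ofReal l *
            (volume (E \ (F ∪ ball x r)) + volume (ball x r \ F)) := by
          rw [mul_add, add_assoc]
          congr 1
          rw [add_comm]
      _ = perim (m+1) F Set.univ + ENNReal.ofReal l * volume (E \ F) := by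
          rw [← hvol_split]
  refine ⟨hle1, fun hlt heq => ?_⟩
  by_contra hv0
  have h1 : perim (m+1) F Set.univ + ENNReal.ofReal l * volume (E \ F)
      ≤ (perim (m+1) F Set.univ
          + ENNReal.ofReal (((m:ℝ)+1)/r) * volume (ball x r \ F))
        + ENNReal.ofReal l * volume (E \ (F ∪ ball x r)) := by
    rw [← heq]
    exact add_le_add_left hper _
  rw [hvol_split, mul_add] at h1
  have h2 : (perim (m+1) F Set.univ + ENNReal.ofReal l * volume (E \ (F ∪ ball x r)))
        + ENNReal.ofReal l * volume (ball x r \ F)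
      ≤ (perim (m+1) F Set.univ + ENNReal.ofReal l * volume (E \ (F ∪ ball x r)))
        + ENNReal.ofReal (((m:ℝ)+1)/r) * volume (ball x r \ F) := by
    calc _ = perim (m+1) F Set.univ + (ENNReal.ofReal l * volume (E \ (F ∪ ball x r))
        + ENNReal.ofReal l * volume (ball x r \ F)) := by rw [add_assoc]
      _ ≤ _ := by
        refine le_trans h1 ?_
        rw [add_assoc, add_assoc]
        refine add_le_add_right ?_ _
        rw [add_comm]
  have hfin2 : perim (m+1) F Set.univ
      + ENNReal.ofReal l * volume (E \ (F ∪ ball x r)) ≠ ⊤ :=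
    ENNReal.add_ne_top.2 ⟨hFper.ne, ENNReal.mul_ne_top ENNReal.ofReal_ne_top hEFB_fin⟩
  have h3 : ENNReal.ofReal l * volume (ball x r \ F)
      ≤ ENNReal.ofReal (((m:ℝ)+1)/r) * volume (ball x r \ F) :=
    (ENNReal.add_le_add_iff_left hfin2).1 h2
  have hstrict : ENNReal.ofReal (((m:ℝ)+1)/r) * volume (ball x r \ F)
      < ENNReal.ofReal l * volume (ball x r \ F) := by
    refine (ENNReal.mul_lt_mul_iff_left hv0 hvBF_fin).2 ?_
    refine ENNReal.ofReal_lt_ofReal_iff ?_ |>.2 ?_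
    · rw [hcast] at hlt
      have : 0 ≤ ((m:ℝ)+1)/r := by positivity
      linarith
    · rw [hcast] at hlt
      exact hlt
  exact absurd (lt_of_lt_of_le hstrict h3) (lt_irrefl _)
end

section
/- Let α ∈ (0,1) and define, on D₁⁺ = {x ∈ (0,1)×(-1,1) : |x₂| < x₁^(1+α)}, the vector field V(x) = (-(1+α)x₁^α, 1)/sqrt(1+(1+α)² x₁^(2α)). Then V is differentiable on D₁⁺ with ∂₂V(x) = 0 and |DV(x)| ≤ c(α)·x₁^(α-1) for a constant c(α) depending only on α; consequently ∫_{D₁⁺} |DV| dx < ∞. -/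
open MeasureTheory Set

/-- The domain `D₁⁺ = {x ∈ (0,1)×(-1,1) : |x₂| < x₁^(1+α)}`. -/
def DOnePlus (α : ℝ) : Set (ℝ × ℝ) :=
  {x : ℝ × ℝ | 0 < x.1 ∧ x.1 < 1 ∧ |x.2| < x.1 ^ (1 + α)}

/-- The vector field `V(x) = (-(1+α)x₁^α, 1)/√(1+(1+α)²x₁^(2α))`. -/
noncomputable def Vfield (α : ℝ) (x : ℝ × ℝ) : ℝ × ℝ :=
  ((-(1 + α) * x.1 ^ α) / Real.sqrt (1 + (1 + α) ^ 2 * x.1 ^ (2 * α)),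
    1 / Real.sqrt (1 + (1 + α) ^ 2 * x.1 ^ (2 * α)))

set_option maxHeartbeats 1000000 in
lemma deriv_bound (α : ℝ) (hα : α ∈ Set.Ioo (0:ℝ) 1) {t : ℝ} (ht : 0 < t) (ht1 : t < 1) :
    ∃ v : ℝ × ℝ, HasDerivAt (fun s => Vfield α (s, 0)) v t ∧ ‖v‖ ≤ 10 * t ^ (α - 1) := by
  obtain ⟨hα0, hα1⟩ := hα
  set W : ℝ → ℝ := fun s => 1 + (1+α)^2 * s ^ (2*α) with hWdef
  have hW1 : 1 ≤ W t := by
    have : 0 ≤ (1+α)^2 * t ^ (2*α) := by positivity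
    simp only [hWdef]; linarith
  have hWpos : 0 < W t := by linarith
  have hSpos : 0 < Real.sqrt (W t) := Real.sqrt_pos.mpr hWpos
  have hS1 : 1 ≤ Real.sqrt (W t) := by
    rw [show (1:ℝ) = Real.sqrt 1 from (Real.sqrt_one).symm]
    exact Real.sqrt_le_sqrt hW1
  have hpow2 : HasDerivAt (fun s : ℝ => s ^ (2*α)) ((2*α) * t ^ (2*α - 1)) t :=
    Real.hasDerivAt_rpow_const (Or.inl ht.ne')
  have hW : HasDerivAt W ((1+α)^2 * ((2*α) * t ^ (2*α-1))) t := (hpow2.const_mul _).const_add 1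
  set d1 : ℝ := 1/(2*Real.sqrt (W t)) * ((1+α)^2 * ((2*α) * t ^ (2*α-1))) with hd1def
  have hS : HasDerivAt (fun s => Real.sqrt (W s)) d1 t :=
    (Real.hasDerivAt_sqrt hWpos.ne').comp t hW
  have hinv : HasDerivAt (fun s => (Real.sqrt (W s))⁻¹) (-d1 / (Real.sqrt (W t))^2) t :=
    hS.inv hSpos.ne'
  have hpow1 : HasDerivAt (fun s : ℝ => s ^ α) (α * t ^ (α-1)) t :=
    Real.hasDerivAt_rpow_const (Or.inl ht.ne')
  have hnum : HasDerivAt (fun s : ℝ => -(1+α) * s ^ α) (-(1+α) * (α * t ^ (α-1))) t :=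
    hpow1.const_mul _
  have h1 : HasDerivAt (fun s => (-(1+α) * s ^ α) * (Real.sqrt (W s))⁻¹)
      (-(1+α) * (α * t ^ (α-1)) * (Real.sqrt (W t))⁻¹
        + (-(1+α) * t ^ α) * (-d1 / (Real.sqrt (W t))^2)) t := hnum.mul hinv
  refine ⟨(-(1+α) * (α * t ^ (α-1)) * (Real.sqrt (W t))⁻¹
    + (-(1+α) * t ^ α) * (-d1 / (Real.sqrt (W t))^2), -d1 / (Real.sqrt (W t))^2), ?_, ?_⟩
  · have hprod := h1.prodMk hinv
    simp only [Vfield]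
    simpa [div_eq_mul_inv, one_div] using hprod
  · -- norm bound
    have htα : t ^ α ≤ 1 := Real.rpow_le_one ht.le ht1.le hα0.le
    have htα0 : 0 < t ^ α := Real.rpow_pos_of_pos ht α
    have htm : 0 < t ^ (α-1) := Real.rpow_pos_of_pos ht _
    have ht21 : t ^ (2*α - 1) = t ^ α * t ^ (α-1) := by
      rw [← Real.rpow_add ht]; ring_nf
    have hd1nn : 0 ≤ d1 := by
      have : 0 ≤ t ^ (2*α-1) := (Real.rpow_pos_of_pos ht _).le
      positivity
    have hd1le : d1 ≤ 4 * (t ^ α * t ^ (α-1)) := by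
      have h2 : t ^ (2*α-1) ≤ t ^ α * t ^ (α-1) := le_of_eq ht21
      have hfrac : 1/(2*Real.sqrt (W t)) ≤ 1/2 := by
        rw [div_le_div_iff₀ (by positivity) (by norm_num)]
        linarith
      have hc : (1+α)^2 * ((2*α) * t ^ (2*α-1)) ≤ 8 * (t ^ α * t ^ (α-1)) := by
        have htp : 0 < t ^ (2*α-1) := Real.rpow_pos_of_pos ht _
        have h4 : (1+α)^2 ≤ 4 := by nlinarith
        have h2a : 2*α * t ^ (2*α-1) ≤ 2 * t ^ (2*α-1) := by nlinarith
        calc (1+α)^2 * ((2*α) * t ^ (2*α-1)) ≤ 4 * (2 * t ^ (2*α-1)) :=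
              mul_le_mul h4 h2a (by positivity) (by norm_num)
          _ = 8 * t ^ (2*α-1) := by ring
          _ ≤ 8 * (t ^ α * t ^ (α-1)) := by linarith
      calc d1 ≤ (1/2) * ((1+α)^2 * ((2*α) * t ^ (2*α-1))) := by
              apply mul_le_mul_of_nonneg_right hfrac
              positivity
        _ ≤ (1/2) * (8 * (t ^ α * t ^ (α-1))) := by linarith
        _ = 4 * (t ^ α * t ^ (α-1)) := by ring
    have hinvS : (Real.sqrt (W t))⁻¹ ≤ 1 := by
      rw [inv_le_one_iff₀]; right; exact hS1
    have hinvS0 : 0 < (Real.sqrt (W t))⁻¹ := by positivity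
    have hSq1 : 1 ≤ (Real.sqrt (W t))^2 := by nlinarith
    have hmix : t ^ α * t ^ (α-1) ≤ t ^ (α-1) := by nlinarith
    rw [Prod.norm_def]
    apply max_le
    · rw [Real.norm_eq_abs]
      have e1 : |-(1+α) * (α * t ^ (α-1)) * (Real.sqrt (W t))⁻¹| ≤ 2 * t ^ (α-1) := by
        rw [abs_mul, abs_mul]
        rw [abs_of_nonpos (by linarith : -(1+α) ≤ 0), abs_of_pos (by positivity),
          abs_of_pos hinvS0]
        have hk : (1+α) * (α * t ^ (α-1)) ≤ 2 * t ^ (α-1) := by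
          have h2 : (1+α) * α ≤ 2 := by nlinarith
          calc (1+α) * (α * t ^ (α-1)) = ((1+α) * α) * t ^ (α-1) := by ring
            _ ≤ 2 * t ^ (α-1) := mul_le_mul_of_nonneg_right h2 htm.le
        have key : (1+α) * (α * t ^ (α-1)) * (Real.sqrt (W t))⁻¹ ≤ 2 * t ^ (α-1) := by
          calc (1+α) * (α * t ^ (α-1)) * (Real.sqrt (W t))⁻¹ ≤ (2 * t ^ (α-1)) * 1 :=
                mul_le_mul hk hinvS hinvS0.le (by linarith)
            _ = 2 * t ^ (α-1) := by ring
        linarith [key]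
      have e2 : |(-(1+α) * t ^ α) * (-d1 / (Real.sqrt (W t))^2)| ≤ 8 * t ^ (α-1) := by
        rw [abs_mul, abs_div, abs_neg]
        rw [abs_of_nonpos (by nlinarith : -(1+α) * t ^ α ≤ 0),
          abs_of_nonneg hd1nn, abs_of_pos (by positivity : (0:ℝ) < (Real.sqrt (W t))^2)]
        have hdd : d1 / (Real.sqrt (W t))^2 ≤ d1 := by
          rw [div_le_iff₀ (by positivity)]
          nlinarith
        have hb : (1+α) * t ^ α ≤ 2 := by nlinarith
        have hdnn : 0 ≤ d1 / (Real.sqrt (W t))^2 := div_nonneg hd1nn (sq_nonneg _)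
        calc -(-(1+α) * t ^ α) * (d1 / (Real.sqrt (W t))^2)
            = (1+α) * t ^ α * (d1 / (Real.sqrt (W t))^2) := by ring
          _
            ≤ 2 * (d1 / (Real.sqrt (W t))^2) := mul_le_mul_of_nonneg_right hb hdnn
          _ ≤ 2 * d1 := by linarith
          _ ≤ 2 * (4 * (t ^ α * t ^ (α-1))) := by linarith
          _ ≤ 8 * t ^ (α-1) := by linarith
      calc |_| ≤ _ := abs_add_le _ _
        _ ≤ 10 * t ^ (α-1) := by linarith
    · rw [Real.norm_eq_abs, abs_div, abs_neg, abs_of_nonneg hd1nn,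
        abs_of_pos (by positivity : (0:ℝ) < (Real.sqrt (W t))^2)]
      have hdd : d1 / (Real.sqrt (W t))^2 ≤ d1 := by
        rw [div_le_iff₀ (by positivity)]
        nlinarith
      linarith

/-- `V` is differentiable on `D₁⁺`, the derivative kills the second
direction, `|DV(x)| ≤ c(α) x₁^(α-1)`, and consequently `∫_{D₁⁺} |DV| < ∞`. -/
theorem stmt15 (α : ℝ) (hα : α ∈ Set.Ioo (0 : ℝ) 1) :
    ∃ c : ℝ, 0 < c ∧
      (∀ x ∈ DOnePlus α,
        DifferentiableAt ℝ (Vfield α) x ∧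
        fderiv ℝ (Vfield α) x (0, 1) = 0 ∧
        ‖fderiv ℝ (Vfield α) x‖ ≤ c * x.1 ^ (α - 1)) ∧
      IntegrableOn (fun x => ‖fderiv ℝ (Vfield α) x‖) (DOnePlus α) := by
  obtain ⟨hα0, hα1⟩ := hα
  have key : ∀ x ∈ DOnePlus α,
      DifferentiableAt ℝ (Vfield α) x ∧
      fderiv ℝ (Vfield α) x (0, 1) = 0 ∧
      ‖fderiv ℝ (Vfield α) x‖ ≤ 10 * x.1 ^ (α - 1) := by
    intro x hx
    obtain ⟨hx1, hx2, -⟩ := hx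
    obtain ⟨v, hv, hvn⟩ := deriv_bound α ⟨hα0, hα1⟩ hx1 hx2
    have hf : HasFDerivAt (Vfield α)
        (((1 : ℝ →L[ℝ] ℝ).smulRight v).comp (ContinuousLinearMap.fst ℝ ℝ ℝ)) x := by
      have hcomp := (hv.hasFDerivAt).comp x (hasFDerivAt_fst (p := x) (𝕜 := ℝ))
      exact hcomp
    have hfd := hf.fderiv
    have htm : 0 < x.1 ^ (α - 1) := Real.rpow_pos_of_pos hx1 _
    refine ⟨hf.differentiableAt, ?_, ?_⟩
    · rw [hfd]; simp
    · rw [hfd]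
      refine ContinuousLinearMap.opNorm_le_bound _ (by positivity) fun p => ?_
      have h1 : ‖(((1 : ℝ →L[ℝ] ℝ).smulRight v).comp (ContinuousLinearMap.fst ℝ ℝ ℝ)) p‖
          = ‖p.1‖ * ‖v‖ := by
        simp [norm_smul]
      rw [h1]
      calc ‖p.1‖ * ‖v‖ ≤ ‖p‖ * (10 * x.1 ^ (α - 1)) :=
            mul_le_mul (norm_fst_le p) hvn (norm_nonneg _) (norm_nonneg _)
        _ = 10 * x.1 ^ (α - 1) * ‖p‖ := by ring
  refine ⟨10, by norm_num, key, ?_⟩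
  -- integrability
  have hmeasD : MeasurableSet (DOnePlus α) := by
    have : DOnePlus α = {x : ℝ × ℝ | 0 < x.1} ∩ ({x : ℝ × ℝ | x.1 < 1}
        ∩ {x : ℝ × ℝ | |x.2| < x.1 ^ (1 + α)}) := rfl
    rw [this]
    refine (measurableSet_lt measurable_const measurable_fst).inter
      ((measurableSet_lt measurable_fst measurable_const).inter
        (measurableSet_lt measurable_snd.abs (measurable_fst.pow_const _)))
  have hsub : DOnePlus α ⊆ Ioo (0:ℝ) 1 ×ˢ Ioo (-1:ℝ) 1 := by
    rintro x ⟨hx1, hx2, hx3⟩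
    have hle : x.1 ^ (1 + α) ≤ 1 := Real.rpow_le_one hx1.le hx2.le (by linarith)
    have := abs_lt.mp (lt_of_lt_of_le hx3 hle)
    exact ⟨⟨hx1, hx2⟩, this.1, this.2⟩
  have h1 : IntegrableOn (fun t : ℝ => 10 * t ^ (α - 1)) (Ioo (0:ℝ) 1) := by
    have hii : IntervalIntegrable (fun t : ℝ => t ^ (α - 1)) volume 0 1 :=
      intervalIntegral.intervalIntegrable_rpow' (by linarith)
    have := (intervalIntegrable_iff_integrableOn_Ioo_of_le (by norm_num)).mp hii
    exact (this.const_mul 10)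
  have hg_int : IntegrableOn (fun x : ℝ × ℝ => 10 * x.1 ^ (α - 1))
      (Ioo (0:ℝ) 1 ×ˢ Ioo (-1:ℝ) 1) := by
    rw [IntegrableOn, Measure.volume_eq_prod, ← Measure.prod_restrict]
    have h2 : Integrable (fun _ : ℝ => (1:ℝ)) (volume.restrict (Ioo (-1:ℝ) 1)) := by
      refine integrable_const_iff.mpr (Or.inr ?_)
      simp [isFiniteMeasure_restrict, Real.volume_Ioo]
    have := Integrable.mul_prod h1 h2
    simpa using this
  have hg_int' : IntegrableOn (fun x : ℝ × ℝ => 10 * x.1 ^ (α - 1)) (DOnePlus α) :=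
    hg_int.mono_set hsub
  refine Integrable.mono' hg_int'
    ((measurable_fderiv ℝ (Vfield α)).norm.aestronglyMeasurable) ?_
  rw [ae_restrict_iff' hmeasD]
  filter_upwards with x hx
  rw [Real.norm_eq_abs, abs_of_nonneg (norm_nonneg _)]
  exact (key x hx).2.2
end

section
/- Let α ∈ (0,1) and p ∈ [1, ∞) with α > (p-2)/(p+1). Define H : (-1,1)² → ℝ measurable with |H(x)| ≤ c(α)·( |x₁|^(α-1)·1_{D₁}(x) + |x₂|^(2α/(1+α) - 1)·1_{D₂}(x) ) where D₁ = {x ∈ (-1,1)² : |x₂| < |x₁|^(1+α)} and D₂ = {x ∈ (-1,1)² : |x₂| > |x₁|^(1+α)}. Then H ∈ L^p((-1,1)²). -/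
open MeasureTheory Set

lemma aux_abs_rpow {r : ℝ} (hr : -1 < r) :
    IntegrableOn (fun y : ℝ => |y| ^ r) (Set.Ioo (-1 : ℝ) 1) := by
  have h01 : IntervalIntegrable (fun y : ℝ => |y| ^ r) volume 0 1 := by
    have h := intervalIntegral.intervalIntegrable_rpow' hr (a := (0:ℝ)) (b := 1)
    rw [intervalIntegrable_iff_integrableOn_Ioo_of_le zero_le_one] at h ⊢
    apply h.congr_fun ?_ measurableSet_Ioo
    intro x hx
    show x ^ r = |x| ^ r
    rw [abs_of_pos hx.1]
  have hneg : IntervalIntegrable (fun y : ℝ => |y| ^ r) volume (-1) 0 := by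
    have h := (IntervalIntegrable.iff_comp_neg (f := fun y : ℝ => |y| ^ r) (a := 0) (b := 1)).mp h01
    simpa [abs_neg] using h.symm
  have := (hneg.trans h01)
  rw [intervalIntegrable_iff_integrableOn_Ioo_of_le (by norm_num : (-1:ℝ) ≤ 1)] at this
  exact this

lemma aux_memLp (p a b : ℝ) (hp : 0 < p) (ha : -1 < a * p) (hb : -1 < b * p) :
    MemLp (fun x : ℝ × ℝ => |x.1| ^ a * |x.2| ^ b) (ENNReal.ofReal p)
      (volume.restrict (Set.Ioo (-1 : ℝ) 1 ×ˢ Set.Ioo (-1 : ℝ) 1)) := by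
  have hq0 : (ENNReal.ofReal p) ≠ 0 := by simp [ENNReal.ofReal_eq_zero, not_le, hp]
  have hqt : (ENNReal.ofReal p) ≠ ⊤ := ENNReal.ofReal_ne_top
  have hmeas : AEStronglyMeasurable (fun x : ℝ × ℝ => |x.1| ^ a * |x.2| ^ b)
      (volume.restrict (Set.Ioo (-1 : ℝ) 1 ×ˢ Set.Ioo (-1 : ℝ) 1)) := by
    apply Measurable.aestronglyMeasurable
    fun_prop
  rw [← memLp_norm_rpow_iff hmeas hq0 hqt, ENNReal.div_self hq0 hqt,
    memLp_one_iff_integrable]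
  have hint1 : IntegrableOn (fun y : ℝ => |y| ^ (a * p)) (Set.Ioo (-1 : ℝ) 1) :=
    aux_abs_rpow ha
  have hint2 : IntegrableOn (fun y : ℝ => |y| ^ (b * p)) (Set.Ioo (-1 : ℝ) 1) :=
    aux_abs_rpow hb
  have := Integrable.mul_prod hint1 hint2
  rw [Measure.prod_restrict] at this
  rw [← Measure.volume_eq_prod] at this
  apply this.congr
  refine Filter.Eventually.of_forall fun x => ?_
  show |x.1| ^ (a * p) * |x.2| ^ (b * p) = ‖|x.1| ^ a * |x.2| ^ b‖ ^ (ENNReal.ofReal p).toReal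
  rw [ENNReal.toReal_ofReal hp.le]
  rw [Real.norm_eq_abs, abs_mul, abs_of_nonneg (Real.rpow_nonneg (abs_nonneg _) _),
    abs_of_nonneg (Real.rpow_nonneg (abs_nonneg _) _),
    Real.mul_rpow (Real.rpow_nonneg (abs_nonneg _) _) (Real.rpow_nonneg (abs_nonneg _) _),
    ← Real.rpow_mul (abs_nonneg _), ← Real.rpow_mul (abs_nonneg _)]

/-- `D₁ = {x ∈ (-1,1)² : |x₂| < |x₁|^(1+α)}`. -/
def DOne (α : ℝ) : Set (ℝ × ℝ) :=
  (Set.Ioo (-1 : ℝ) 1 ×ˢ Set.Ioo (-1 : ℝ) 1) ∩ {x : ℝ × ℝ | |x.2| < |x.1| ^ (1 + α)}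

/-- `D₂ = {x ∈ (-1,1)² : |x₂| > |x₁|^(1+α)}`. -/
def DTwo (α : ℝ) : Set (ℝ × ℝ) :=
  (Set.Ioo (-1 : ℝ) 1 ×ˢ Set.Ioo (-1 : ℝ) 1) ∩ {x : ℝ × ℝ | |x.1| ^ (1 + α) < |x.2|}

/-- a measurable `H` bounded by
`c(|x₁|^(α-1) 1_{D₁} + |x₂|^(2α/(1+α)-1) 1_{D₂})` lies in `L^p((-1,1)²)`
whenever `α > (p-2)/(p+1)`. -/
theorem stmt16 (α p : ℝ) (hα : α ∈ Set.Ioo (0 : ℝ) 1) (hp : 1 ≤ p)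
    (hcond : α > (p - 2) / (p + 1)) (c : ℝ) (hc : 0 ≤ c)
    (H : ℝ × ℝ → ℝ) (hHmeas : Measurable H)
    (hHbd : ∀ x ∈ Set.Ioo (-1 : ℝ) 1 ×ˢ Set.Ioo (-1 : ℝ) 1,
      |H x| ≤ c * (Set.indicator (DOne α) (fun y => |y.1| ^ (α - 1)) x +
        Set.indicator (DTwo α) (fun y => |y.2| ^ (2 * α / (1 + α) - 1)) x)) :
    MemLp H (ENNReal.ofReal p)
      (volume.restrict (Set.Ioo (-1 : ℝ) 1 ×ˢ Set.Ioo (-1 : ℝ) 1)) := by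
  obtain ⟨hα0, hα1⟩ := hα
  have hp0 : (0 : ℝ) < p := lt_of_lt_of_le one_pos hp
  have h1α : (0 : ℝ) < 1 + α := by linarith
  -- the key inequality
  have key : (1 - α) * p < 2 + α := by
    rw [gt_iff_lt, div_lt_iff₀ (by linarith : (0:ℝ) < p + 1)] at hcond
    nlinarith
  -- choose t and s
  set A : ℝ := ((1 - α) * p - 1) / (1 + α) with hA_def
  have hA1 : A < 1 := by
    rw [hA_def, div_lt_one h1α]; linarith
  set t : ℝ := (max A 0 + 1) / 2 with ht_def
  have ht0 : 0 < t := by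
    have : (0:ℝ) ≤ max A 0 := le_max_right _ _
    rw [ht_def]; linarith
  have ht1 : t < 1 := by
    have : max A 0 < 1 := max_lt hA1 one_pos
    rw [ht_def]; linarith
  have htA : A < t := by
    have h1 : A ≤ max A 0 := le_max_left _ _
    have : max A 0 < 1 := max_lt hA1 one_pos
    rw [ht_def]; linarith
  set B : ℝ := (1 - α) * p - (1 + α) with hB_def
  have hB1 : B < 1 := by rw [hB_def]; linarith
  set s : ℝ := (max B 0 + 1) / 2 with hs_def
  have hs0 : 0 < s := by
    have : (0:ℝ) ≤ max B 0 := le_max_right _ _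
    rw [hs_def]; linarith
  have hs1 : s < 1 := by
    have : max B 0 < 1 := max_lt hB1 one_pos
    rw [hs_def]; linarith
  have hsB : B < s := by
    have h1 : B ≤ max B 0 := le_max_left _ _
    have : max B 0 < 1 := max_lt hB1 one_pos
    rw [hs_def]; linarith
  set θ : ℝ := t / p with hθ_def
  set σ : ℝ := s / (p * (1 + α)) with hσ_def
  have hθ0 : 0 < θ := div_pos ht0 hp0
  have hσ0 : 0 < σ := div_pos hs0 (by positivity)
  -- the dominating functions
  set a₁ : ℝ := α - 1 + θ * (1 + α) with ha₁_def
  set b₁ : ℝ := -θ with hb₁_def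
  set a₂ : ℝ := -(σ * (1 + α)) with ha₂_def
  set b₂ : ℝ := 2 * α / (1 + α) - 1 + σ with hb₂_def
  have hθp : θ * p = t := by rw [hθ_def]; field_simp
  have hσp : σ * (1 + α) * p = s := by rw [hσ_def]; field_simp
  have hmem1 : MemLp (fun x : ℝ × ℝ => |x.1| ^ a₁ * |x.2| ^ b₁) (ENNReal.ofReal p)
      (volume.restrict (Set.Ioo (-1 : ℝ) 1 ×ˢ Set.Ioo (-1 : ℝ) 1)) := by
    apply aux_memLp p a₁ b₁ hp0
    · have hAt : (1 - α) * p - 1 < t * (1 + α) := by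
        rw [← div_lt_iff₀ h1α]; exact htA
      have : a₁ * p = (α - 1) * p + t * (1 + α) := by
        rw [ha₁_def]; rw [add_mul, mul_comm θ (1+α), mul_assoc, hθp]; ring
      rw [this]; linarith
    · have : b₁ * p = -t := by rw [hb₁_def, neg_mul, hθp]
      rw [this]; linarith
  have hmem2 : MemLp (fun x : ℝ × ℝ => |x.1| ^ a₂ * |x.2| ^ b₂) (ENNReal.ofReal p)
      (volume.restrict (Set.Ioo (-1 : ℝ) 1 ×ˢ Set.Ioo (-1 : ℝ) 1)) := by
    apply aux_memLp p a₂ b₂ hp0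
    · have : a₂ * p = -s := by rw [ha₂_def, neg_mul, hσp]
      rw [this]; linarith
    · have hb₂p : b₂ * p = ((2 * α - (1 + α)) * p + s) / (1 + α) := by
        rw [hb₂_def, hσ_def]; field_simp
      rw [hb₂p, lt_div_iff₀ h1α]
      have : B < s := hsB
      rw [hB_def] at this
      nlinarith
  -- the dominating function G
  set g₁ : ℝ × ℝ → ℝ := fun x => |x.1| ^ a₁ * |x.2| ^ b₁ with hg₁_def
  set g₂ : ℝ × ℝ → ℝ := fun x => |x.1| ^ a₂ * |x.2| ^ b₂ with hg₂_def
  set G : ℝ × ℝ → ℝ := fun x => c * (g₁ x + g₂ x) with hG_def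
  have hGmem : MemLp G (ENNReal.ofReal p)
      (volume.restrict (Set.Ioo (-1 : ℝ) 1 ×ˢ Set.Ioo (-1 : ℝ) 1)) :=
    (hmem1.add hmem2).const_mul c
  -- pointwise bound off the axes
  have hptwise : ∀ x : ℝ × ℝ, x.1 ≠ 0 → x.2 ≠ 0 →
      x ∈ Set.Ioo (-1 : ℝ) 1 ×ˢ Set.Ioo (-1 : ℝ) 1 → |H x| ≤ G x := by
    intro x hx1 hx2 hxmem
    refine (hHbd x hxmem).trans ?_
    rw [hG_def]
    have hx1' : 0 < |x.1| := abs_pos.mpr hx1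
    have hx2' : 0 < |x.2| := abs_pos.mpr hx2
    have hclaim1 : Set.indicator (DOne α) (fun y => |y.1| ^ (α - 1)) x ≤ g₁ x := by
      by_cases hD : x ∈ DOne α
      · rw [Set.indicator_of_mem hD]
        have hlt : |x.2| < |x.1| ^ (1 + α) := hD.2
        have h2 : (|x.1| ^ (1 + α)) ^ (-θ) ≤ |x.2| ^ (-θ) :=
          Real.rpow_le_rpow_of_nonpos hx2' hlt.le (by linarith)
        have heq : |x.1| ^ a₁ * (|x.1| ^ (1 + α)) ^ (-θ) = |x.1| ^ (α - 1) := by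
          rw [← Real.rpow_mul (abs_nonneg _), ← Real.rpow_add hx1', ha₁_def]
          ring_nf
        calc |x.1| ^ (α - 1) = |x.1| ^ a₁ * (|x.1| ^ (1 + α)) ^ (-θ) := heq.symm
          _ ≤ |x.1| ^ a₁ * |x.2| ^ (-θ) := by
              apply mul_le_mul_of_nonneg_left h2 (Real.rpow_nonneg (abs_nonneg _) _)
          _ = g₁ x := rfl
      · rw [Set.indicator_of_notMem hD]
        rw [hg₁_def]; positivity
    have hclaim2 : Set.indicator (DTwo α) (fun y => |y.2| ^ (2 * α / (1 + α) - 1)) x ≤ g₂ x := by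
      by_cases hD : x ∈ DTwo α
      · rw [Set.indicator_of_mem hD]
        have hlt : |x.1| ^ (1 + α) < |x.2| := hD.2
        have h2 : |x.2| ^ (-σ) ≤ (|x.1| ^ (1 + α)) ^ (-σ) :=
          Real.rpow_le_rpow_of_nonpos (Real.rpow_pos_of_pos hx1' _) hlt.le (by linarith)
        have heq : (|x.1| ^ (1 + α)) ^ (-σ) * |x.2| ^ (2 * α / (1 + α) - 1 + σ)
            = |x.1| ^ a₂ * |x.2| ^ b₂ := by
          rw [← Real.rpow_mul (abs_nonneg _), ha₂_def, hb₂_def]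
          ring_nf
        calc |x.2| ^ (2 * α / (1 + α) - 1)
            = |x.2| ^ (-σ) * |x.2| ^ (2 * α / (1 + α) - 1 + σ) := by
              rw [← Real.rpow_add hx2']; ring_nf
          _ ≤ (|x.1| ^ (1 + α)) ^ (-σ) * |x.2| ^ (2 * α / (1 + α) - 1 + σ) := by
              apply mul_le_mul_of_nonneg_right h2 (Real.rpow_nonneg (abs_nonneg _) _)
          _ = g₂ x := heq
      · rw [Set.indicator_of_notMem hD]
        rw [hg₂_def]; positivity
    exact mul_le_mul_of_nonneg_left (add_le_add hclaim1 hclaim2) hc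
  -- a.e. bound
  have hnull1 : (volume : Measure (ℝ × ℝ)) {x : ℝ × ℝ | x.1 = 0} = 0 := by
    have : {x : ℝ × ℝ | x.1 = 0} = ({0} : Set ℝ) ×ˢ (univ : Set ℝ) := by
      ext y; simp [Set.mem_prod, Prod.ext_iff, eq_comm]
    rw [this, Measure.volume_eq_prod, Measure.prod_prod]
    simp
  have hnull2 : (volume : Measure (ℝ × ℝ)) {x : ℝ × ℝ | x.2 = 0} = 0 := by
    have : {x : ℝ × ℝ | x.2 = 0} = (univ : Set ℝ) ×ˢ ({0} : Set ℝ) := by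
      ext y; simp [Set.mem_prod, Prod.ext_iff, eq_comm]
    rw [this, Measure.volume_eq_prod, Measure.prod_prod]
    simp
  have hae1 : ∀ᵐ x : ℝ × ℝ ∂volume, x.1 ≠ 0 := by
    rw [ae_iff]; simpa using hnull1
  have hae2 : ∀ᵐ x : ℝ × ℝ ∂volume, x.2 ≠ 0 := by
    rw [ae_iff]; simpa using hnull2
  have hrectmeas : MeasurableSet (Set.Ioo (-1 : ℝ) 1 ×ˢ Set.Ioo (-1 : ℝ) 1) :=
    measurableSet_Ioo.prod measurableSet_Ioo
  have haebd : ∀ᵐ x ∂(volume.restrict (Set.Ioo (-1 : ℝ) 1 ×ˢ Set.Ioo (-1 : ℝ) 1)),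
      ‖H x‖ ≤ ‖G x‖ := by
    filter_upwards [ae_restrict_mem hrectmeas, ae_restrict_of_ae hae1,
      ae_restrict_of_ae hae2] with x hxmem hx1 hx2
    calc ‖H x‖ = |H x| := Real.norm_eq_abs _
      _ ≤ G x := hptwise x hx1 hx2 hxmem
      _ ≤ ‖G x‖ := Real.le_norm_self _
  exact hGmem.of_le hHmeas.aestronglyMeasurable haebd
end
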